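/- Let μ ≥ 0 and let b : [0, ∞) → ℝⁿ be continuous with ∑_{j=1}^{n} b_j(t) = 1 for all t. Let f : ℝⁿ × [0, ∞) → ℝ be continuously differentiable such that for every T > 0 there is a compact set K contained in the open positive orthant {x : x_i > 0 for all i} with f(x, t) = 0 for all x ∉ K and t ∈ [0, T], and such that ∂_t f + div_x ( (b(t) − μx) f ) = 0 for all x and t. Define Λ_i(t) := ∫ (x_i / ∑_j x_j) f(x, t) dx. Then each Λ_i is differentiable with Λ_i′(t) = ∫ (1/∑_j x_j) ( b_i(t) − x_i/∑_j x_j ) f(x, t) dx; in particular Λ′ does not depend on the memory factor μ. -/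

import Mathlib

open MeasureTheory Filter Set Topology

private lemma psi_aux {ε : ℝ} (hε : 0 < ε) :
    ∃ ψ : ℝ → ℝ, ContDiff ℝ 1 ψ ∧ (∀ s, 0 < ψ s) ∧ (∀ s, ε ≤ s → ψ s = s) := by
  refine ⟨fun s => ε/2 + (s - ε/2) * Real.smoothTransition ((2*s - ε)/ε), ?_, ?_, ?_⟩
  · apply ContDiff.add contDiff_const
    apply ContDiff.mul (contDiff_id.sub contDiff_const)
    exact Real.smoothTransition.contDiff.comp
      (((contDiff_const.mul contDiff_id).sub contDiff_const).div_const ε)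
  · intro s
    simp only []
    rcases le_or_gt s (ε/2) with h | h
    · have h0 : (2*s - ε)/ε ≤ 0 := div_nonpos_of_nonpos_of_nonneg (by linarith) hε.le
      rw [Real.smoothTransition.zero_of_nonpos h0]
      simp only [mul_zero, add_zero]; linarith
    · have h1 : (0:ℝ) ≤ s - ε/2 := by linarith
      have h2 := Real.smoothTransition.nonneg (x := (2*s - ε)/ε)
      nlinarith
  · intro s hs
    show ε/2 + (s - ε/2) * Real.smoothTransition ((2*s - ε)/ε) = s
    have h1 : (1:ℝ) ≤ (2*s - ε)/ε := (one_le_div hε).2 (by linarith)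
    rw [Real.smoothTransition.one_of_one_le h1]; ring

/-- In the PDE model of fictitious play with memory factor `μ ≥ 0` and mean best response
`b(t)` (components summing to `1`), if the density `f` is continuously differentiable,
supported (uniformly on compact time intervals) in a compact subset of the open positive
orthant, and solves `∂_t f + divₓ ((b t - μ x) f) = 0`, then the mean empirical
probabilities `Λ_i t = ∫ (x_i / ∑_j x_j) f (x, t) dx` are differentiable with
`Λ_i' t = ∫ (1/∑_j x_j) (b_i t - x_i/∑_j x_j) f (x, t) dx`; in particular `Λ'` does not
depend on `μ`. -/
theorem stmt_19 {n : ℕ} (μ : ℝ) (hμ : 0 ≤ μ) (b : ℝ → Fin n → ℝ)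
    (hb_cont : ContinuousOn b (Set.Ici 0))
    (hb_sum : ∀ t ≥ (0 : ℝ), ∑ j, b t j = 1)
    (f : (Fin n → ℝ) → ℝ → ℝ)
    (hf : ContDiffOn ℝ 1 (fun p : (Fin n → ℝ) × ℝ => f p.1 p.2)
      (Set.univ ×ˢ Set.Ici 0))
    (hsupp : ∀ T > (0 : ℝ), ∃ K : Set (Fin n → ℝ), IsCompact K ∧
      K ⊆ {x : Fin n → ℝ | ∀ i, 0 < x i} ∧
      ∀ x ∉ K, ∀ t ∈ Set.Icc (0 : ℝ) T, f x t = 0)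
    (hpde : ∀ x, ∀ t ≥ (0 : ℝ),
      derivWithin (fun s => f x s) (Set.Ici 0) t +
        ∑ i, fderiv ℝ (fun y => (b t i - μ * y i) * f y t) x (Pi.single i 1) = 0) :
    ∀ i, ∀ t ≥ (0 : ℝ),
      HasDerivWithinAt (fun s => ∫ x : Fin n → ℝ, (x i / ∑ j, x j) * f x s)
        (∫ x : Fin n → ℝ, (1 / ∑ j, x j) * (b t i - x i / ∑ j, x j) * f x t)
        (Set.Ici 0) t := by
  -- the case n = 0 is vacuous via `Fin 0`
  rcases Nat.eq_zero_or_pos n with hn | hn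
  · subst hn
    have h01 := hb_sum 0 le_rfl
    simp at h01
  have : NeZero n := ⟨hn.ne'⟩
  intro i t ht
  obtain ⟨K, hK, hKpos, hK0⟩ := hsupp (t+1) (by linarith)
  have htV : t ∈ Set.Icc (0:ℝ) (t+1) := ⟨ht, by linarith⟩
  set S : (Fin n → ℝ) → ℝ := fun x => ∑ j, x j with hSdef
  -- the linear functional computing S
  set Lsum : (Fin n → ℝ) →L[ℝ] ℝ := ∑ j, ContinuousLinearMap.proj j with hLdef
  have hLS : ⇑Lsum = S := by
    funext v
    simp [hLdef, hSdef]
  have hS1 : ContDiff ℝ 1 S := hLS ▸ Lsum.contDiff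
  have hScont : Continuous S := hS1.continuous
  -- positive lower bound for S on K
  have hSK : ∃ ε > (0:ℝ), ∀ x ∈ K, 2*ε ≤ S x := by
    by_cases hKne : K.Nonempty
    · obtain ⟨x₀, hx₀K, hx₀⟩ := hK.exists_isMinOn hKne hScont.continuousOn
      have hS₀ : 0 < S x₀ :=
        Finset.sum_pos (fun j _ => hKpos hx₀K j) Finset.univ_nonempty
      exact ⟨S x₀ / 4, by linarith, fun x hx => by
        have h2 := hx₀ hx
        simp only [Set.mem_setOf_eq] at h2
        simp only [hSdef] at h2 hS₀ ⊢
        linarith⟩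
    · exact ⟨1, one_pos, fun x hx => absurd ⟨x, hx⟩ hKne⟩
  obtain ⟨ε, hε, hεK⟩ := hSK
  obtain ⟨ψ, hψ1, hψpos, hψeq⟩ := psi_aux hε
  -- globally C¹ replacement for x ↦ x i / S x
  set g : (Fin n → ℝ) → ℝ := fun x => x i / ψ (S x) with hgdef
  have hg1 : ContDiff ℝ 1 g :=
    ((ContinuousLinearMap.proj i : (Fin n → ℝ) →L[ℝ] ℝ).contDiff).div
      (hψ1.comp hS1) (fun x => (hψpos _).ne')
  have hagree : ∀ y, ε ≤ S y → g y = y i / S y := by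
    intro y hy
    simp only [hgdef, hψeq _ hy]
  -- integrability helper
  have hint : ∀ w : (Fin n → ℝ) → ℝ, Continuous w → (∀ x, x ∉ K → w x = 0) →
      Integrable w := by
    intro w hwc hw0
    exact hwc.integrable_of_hasCompactSupport (HasCompactSupport.intro hK hw0)
  -- slices of f
  have hfslice : ∀ s ∈ Set.Ici (0:ℝ), ContDiff ℝ 1 (fun y => f y s) := by
    intro s hs
    rw [← contDiffOn_univ]
    have := hf.comp (f := fun y : Fin n → ℝ => (y, s)) (s := (Set.univ : Set (Fin n → ℝ)))
      (contDiff_id.prodMk contDiff_const).contDiffOn (fun y _ => ⟨trivial, hs⟩)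
    simpa [Function.comp_def] using this
  have hcont_slice : ∀ s ∈ Set.Ici (0:ℝ), Continuous (fun x => f x s) :=
    fun s hs => (hfslice s hs).continuous
  have hint_gf : ∀ s ∈ Set.Icc (0:ℝ) (t+1), Integrable (fun x => g x * f x s) := by
    intro s hs
    exact hint _ (hg1.continuous.mul (hcont_slice s hs.1)) (fun x hx => by
      rw [hK0 x hx s hs, mul_zero])
  -- the time-derivative of slices, as value of the fderivWithin on the product set
  set PS : Set ((Fin n → ℝ) × ℝ) := Set.univ ×ˢ Set.Ici 0 with hPSdef
  have hPSu : UniqueDiffOn ℝ PS := uniqueDiffOn_univ.prod (uniqueDiffOn_Ici 0)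
  set A : ((Fin n → ℝ) × ℝ) → ((Fin n → ℝ) × ℝ) →L[ℝ] ℝ :=
    fderivWithin ℝ (fun p : (Fin n → ℝ) × ℝ => f p.1 p.2) PS with hAdef
  have hφ : ∀ x : Fin n → ℝ, ∀ s ∈ Set.Ici (0:ℝ),
      HasDerivWithinAt (fun τ => f x τ) (A (x, s) (0, 1)) (Set.Ici 0) s := by
    intro x s hs
    have hmem : ((x, s) : (Fin n → ℝ) × ℝ) ∈ PS := ⟨trivial, hs⟩
    have hdw : HasFDerivWithinAt (fun p : (Fin n → ℝ) × ℝ => f p.1 p.2) (A (x, s)) PS (x, s) :=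
      ((hf.differentiableOn one_ne_zero) _ hmem).hasFDerivWithinAt
    have hι : HasFDerivWithinAt (fun τ : ℝ => ((x, τ) : (Fin n → ℝ) × ℝ))
        ((0 : ℝ →L[ℝ] (Fin n → ℝ)).prod (ContinuousLinearMap.id ℝ ℝ)) (Set.Ici 0) s :=
      (((hasFDerivAt_const x s).prodMk (hasFDerivAt_id s))).hasFDerivWithinAt
    have hcomp := hdw.comp s hι (fun τ hτ => ⟨trivial, hτ⟩)
    have := hcomp.hasDerivWithinAt
    simpa [Function.comp_def] using this
  -- uniform bound on the time-derivative over K × [0, t+1]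
  have hAcont : ContinuousOn A PS := hf.continuousOn_fderivWithin hPSu le_rfl
  have hKT : IsCompact (K ×ˢ Set.Icc (0:ℝ) (t+1)) := hK.prod isCompact_Icc
  have hKTsub : (K ×ˢ Set.Icc (0:ℝ) (t+1)) ⊆ PS :=
    Set.prod_mono (Set.subset_univ K) Set.Icc_subset_Ici_self
  obtain ⟨C, hC⟩ := hKT.exists_bound_of_continuousOn (hAcont.mono hKTsub)
  have hone : ‖(((0 : Fin n → ℝ), (1:ℝ)) : (Fin n → ℝ) × ℝ)‖ = 1 := by
    simp [Prod.norm_def]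
  have hderivb : ∀ x ∈ K, ∀ s ∈ Set.Icc (0:ℝ) (t+1), ‖A (x, s) (0, 1)‖ ≤ C := by
    intro x hx s hs
    calc ‖A (x, s) (0, 1)‖ ≤ ‖A (x, s)‖ * ‖(((0 : Fin n → ℝ), (1:ℝ)) : (Fin n → ℝ) × ℝ)‖ :=
          (A (x, s)).le_opNorm _
      _ = ‖A (x, s)‖ := by rw [hone, mul_one]
      _ ≤ C := hC _ ⟨hx, hs⟩
  -- Lipschitz bound in time on K
  have hlip : ∀ x ∈ K, ∀ s ∈ Set.Icc (0:ℝ) (t+1), ∀ s' ∈ Set.Icc (0:ℝ) (t+1),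
      ‖f x s' - f x s‖ ≤ C * ‖s' - s‖ := by
    intro x hx s hs s' hs'
    exact (convex_Icc (0:ℝ) (t+1)).norm_image_sub_le_of_norm_hasDerivWithin_le
      (f := fun τ => f x τ) (f' := fun τ => A (x, τ) (0, 1))
      (fun τ hτ => (hφ x τ hτ.1).mono Set.Icc_subset_Ici_self)
      (fun τ hτ => hderivb x hx τ hτ) hs hs'
  -- bound on g over K
  obtain ⟨M, hM⟩ := hK.exists_bound_of_continuousOn hg1.continuous.continuousOn
  -- step A : differentiation under the integral sign
  have stepA : HasDerivWithinAt (fun s => ∫ x, g x * f x s)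
      (∫ x, g x * A (x, t) (0, 1)) (Set.Ici 0) t := by
    rw [hasDerivWithinAt_iff_tendsto_slope]
    set l : Filter ℝ := nhdsWithin t (Set.Ici 0 \ {t}) with hldef
    have hev : ∀ᶠ s in l, s ∈ Set.Icc (0:ℝ) (t+1) \ {t} := by
      filter_upwards [self_mem_nhdsWithin,
        mem_nhdsWithin_of_mem_nhds (Iio_mem_nhds (show t < t+1 by linarith))] with s hs1 hs2
      exact ⟨⟨hs1.1, le_of_lt hs2⟩, hs1.2⟩
    have main : Tendsto (fun s => ∫ x, g x * ((f x s - f x t) / (s - t))) l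
        (𝓝 (∫ x, g x * A (x, t) (0, 1))) := by
      apply tendsto_integral_filter_of_dominated_convergence
        (K.indicator fun _ => M * C)
      · filter_upwards [hev] with s hs
        exact ((hg1.continuous.mul (((hcont_slice s hs.1.1).sub
          (hcont_slice t ht)).div_const _))).aestronglyMeasurable
      · filter_upwards [hev] with s hs
        refine ae_of_all _ fun x => ?_
        by_cases hxK : x ∈ K
        · rw [Set.indicator_of_mem hxK]
          have hst : s - t ≠ 0 := sub_ne_zero.2 hs.2
          have h1 : ‖(f x s - f x t) / (s - t)‖ ≤ C := by
            rw [norm_div]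
            rw [div_le_iff₀ (norm_pos_iff.2 hst)]
            calc ‖f x s - f x t‖ ≤ C * ‖s - t‖ := hlip x hxK t htV s hs.1
              _ = C * ‖s - t‖ := rfl
          calc ‖g x * ((f x s - f x t) / (s - t))‖
              = ‖g x‖ * ‖(f x s - f x t) / (s - t)‖ := norm_mul _ _
            _ ≤ M * C := mul_le_mul (hM x hxK) h1 (norm_nonneg _)
                ((norm_nonneg (g x)).trans (hM x hxK))
        · rw [Set.indicator_of_notMem hxK, hK0 x hxK s hs.1, hK0 x hxK t htV]
          simp
      · rw [integrable_indicator_iff hK.isClosed.measurableSet]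
        exact integrableOn_const hK.measure_lt_top.ne
      · refine ae_of_all _ fun x => ?_
        have h := hasDerivWithinAt_iff_tendsto_slope.1 (hφ x t ht)
        have h' : Tendsto (fun s => (f x s - f x t) / (s - t)) l (𝓝 (A (x, t) (0, 1))) := by
          refine h.congr fun s => ?_
          rw [slope_def_field]
        exact h'.const_mul (g x)
    refine main.congr' ?_
    filter_upwards [hev] with s hs
    have hst : s - t ≠ 0 := sub_ne_zero.2 hs.2
    calc ∫ x, g x * ((f x s - f x t) / (s - t))
        = ∫ x, (g x * f x s - g x * f x t) / (s - t) := by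
          refine integral_congr_ae (Eventually.of_forall fun x => ?_)
          ring
      _ = (∫ x, (g x * f x s - g x * f x t)) / (s - t) := integral_div _ _
      _ = ((∫ x, g x * f x s) - ∫ x, g x * f x t) / (s - t) := by
          rw [integral_sub (hint_gf s hs.1) (hint_gf t htV)]
      _ = slope (fun s => ∫ x, g x * f x s) t s :=
          (slope_def_field (fun s => ∫ x, g x * f x s) t s).symm
  -- rewrite the time derivative using the PDE
  have hpde' : ∀ x, A (x, t) (0, 1) =
      -∑ k, fderiv ℝ (fun y => (b t k - μ * y k) * f y t) x (Pi.single k 1) := by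
    intro x
    have h1 : derivWithin (fun s => f x s) (Set.Ici 0) t = A (x, t) (0, 1) :=
      (hφ x t ht).derivWithin ((uniqueDiffOn_Ici 0) t ht)
    have h2 := hpde x t ht
    rw [h1] at h2
    linarith
  -- the coefficient functions
  have hk1 : ∀ k, ContDiff ℝ 1 (fun y : Fin n → ℝ => (b t k - μ * y k) * f y t) := by
    intro k
    exact (contDiff_const.sub (contDiff_const.mul
      ((ContinuousLinearMap.proj k : (Fin n → ℝ) →L[ℝ] ℝ).contDiff))).mul (hfslice t ht)
  have hk0 : ∀ k, ∀ x, x ∉ K → (b t k - μ * x k) * f x t = 0 := fun k x hx => by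
    rw [hK0 x hx t htV, mul_zero]
  have hkD0 : ∀ k, ∀ x, x ∉ K →
      fderiv ℝ (fun y => (b t k - μ * y k) * f y t) x = 0 := by
    intro k x hx
    have hev : (fun y : Fin n → ℝ => (b t k - μ * y k) * f y t) =ᶠ[𝓝 x] fun _ => 0 :=
      Filter.eventuallyEq_of_mem (hK.isClosed.isOpen_compl.mem_nhds hx)
        (fun y hy => hk0 k y hy)
    rw [hev.fderiv_eq, fderiv_fun_const]
    rfl
  -- integrability of all the pieces
  have h1int : ∀ k, Integrable (fun x => fderiv ℝ g x (Pi.single k 1) *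
      ((b t k - μ * x k) * f x t)) := by
    intro k
    refine hint _ ?_ (fun x hx => by rw [hk0 k x hx, mul_zero])
    exact ((hg1.continuous_fderiv one_ne_zero).clm_apply continuous_const).mul (hk1 k).continuous
  have h2int : ∀ k, Integrable (fun x => g x *
      fderiv ℝ (fun y => (b t k - μ * y k) * f y t) x (Pi.single k 1)) := by
    intro k
    refine hint _ ?_ (fun x hx => by rw [hkD0 k x hx]; simp)
    exact hg1.continuous.mul (((hk1 k).continuous_fderiv one_ne_zero).clm_apply continuous_const)
  have h3int : ∀ k, Integrable (fun x => g x * ((b t k - μ * x k) * f x t)) := by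
    intro k
    refine hint _ ?_ (fun x hx => by rw [hk0 k x hx, mul_zero])
    exact hg1.continuous.mul (hk1 k).continuous
  -- integration by parts
  have ibp : ∀ k, ∫ x, g x * fderiv ℝ (fun y => (b t k - μ * y k) * f y t) x (Pi.single k 1)
      = -∫ x, fderiv ℝ g x (Pi.single k 1) * ((b t k - μ * x k) * f x t) := by
    intro k
    exact integral_mul_fderiv_eq_neg_fderiv_mul_of_integrable (h1int k) (h2int k) (h3int k)
      (fun x _ => hg1.differentiable one_ne_zero x) (fun x _ => (hk1 k).differentiable one_ne_zero x)
  -- pointwise algebraic identity for the divergence term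
  have halg : ∀ x, ∑ k, fderiv ℝ g x (Pi.single k 1) * ((b t k - μ * x k) * f x t)
      = (1 / S x) * (b t i - x i / S x) * f x t := by
    intro x
    by_cases hxK : x ∈ K
    · have hSx : ε < S x := by have := hεK x hxK; linarith
      have hSpos : (0:ℝ) < S x := by linarith
      -- the derivative of g at x
      have hfd : ∀ k, fderiv ℝ g x (Pi.single k 1) =
          (if i = k then (1:ℝ) else 0) / S x - x i / S x ^ 2 := by
        intro k
        have hgU : g =ᶠ[𝓝 x] fun y => y i * (S y)⁻¹ := by
          have hU : {y : Fin n → ℝ | ε < S y} ∈ 𝓝 x :=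
            (isOpen_lt continuous_const hScont).mem_nhds hSx
          filter_upwards [hU] with y hy
          rw [hagree y (le_of_lt hy), div_eq_mul_inv]
        have hSfd : HasFDerivAt S Lsum x := hLS ▸ Lsum.hasFDerivAt
        have hinv : HasFDerivAt (fun y => (S y)⁻¹) ((-(S x ^ 2)⁻¹) • Lsum) x := by
          have h := (hasDerivAt_inv (ne_of_gt hSpos)).comp_hasFDerivAt x hSfd
          exact h
        have hproj : HasFDerivAt (fun y : Fin n → ℝ => y i)
            (ContinuousLinearMap.proj i : (Fin n → ℝ) →L[ℝ] ℝ) x :=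
          (ContinuousLinearMap.proj i : (Fin n → ℝ) →L[ℝ] ℝ).hasFDerivAt
        have hmul : HasFDerivAt (fun y : Fin n → ℝ => y i * (S y)⁻¹)
            (x i • ((-(S x ^ 2)⁻¹) • Lsum) +
              (S x)⁻¹ • (ContinuousLinearMap.proj i : (Fin n → ℝ) →L[ℝ] ℝ)) x :=
          hproj.mul hinv
        rw [hgU.fderiv_eq, hmul.fderiv]
        have hLs1 : Lsum (Pi.single k 1) = 1 := by
          rw [hLS]
          simp [hSdef, Pi.single_apply]
        simp only [ContinuousLinearMap.add_apply, ContinuousLinearMap.smul_apply,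
          ContinuousLinearMap.proj_apply, hLs1, smul_eq_mul, Pi.single_apply]
        rw [eq_comm]
        split_ifs with h <;> field_simp <;> ring
      have key2 : ∑ k, (b t k - μ * x k) = 1 - μ * S x := by
        rw [Finset.sum_sub_distrib, hb_sum t ht, ← Finset.mul_sum]
      calc ∑ k, fderiv ℝ g x (Pi.single k 1) * ((b t k - μ * x k) * f x t)
          = ∑ k, (((if i = k then (1:ℝ) else 0) / S x - x i / S x ^ 2) *
              ((b t k - μ * x k) * f x t)) :=
            Finset.sum_congr rfl (fun k _ => by rw [hfd k])
        _ = ∑ k, ((if i = k then ((b t k - μ * x k) * f x t / S x) else 0) -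
              x i / S x ^ 2 * ((b t k - μ * x k) * f x t)) :=
            Finset.sum_congr rfl (fun k _ => by split_ifs with h <;> ring)
        _ = (∑ k, if i = k then ((b t k - μ * x k) * f x t / S x) else 0) -
              ∑ k, x i / S x ^ 2 * ((b t k - μ * x k) * f x t) :=
            Finset.sum_sub_distrib _ _
        _ = ((b t i - μ * x i) * f x t / S x) -
              x i / S x ^ 2 * ((∑ k, (b t k - μ * x k)) * f x t) := by
            rw [Finset.sum_ite_eq]
            simp only [Finset.mem_univ, if_true]
            rw [← Finset.mul_sum, ← Finset.sum_mul]
        _ = (1 / S x) * (b t i - x i / S x) * f x t := by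
            rw [key2]
            field_simp
            ring
    · rw [hK0 x hxK t htV]
      simp
  -- the value of the derivative
  have hval : (∫ x, g x * A (x, t) (0, 1)) =
      ∫ x, (1 / S x) * (b t i - x i / S x) * f x t := by
    calc ∫ x, g x * A (x, t) (0, 1)
        = ∫ x, ∑ k, -(g x *
            fderiv ℝ (fun y => (b t k - μ * y k) * f y t) x (Pi.single k 1)) := by
          refine integral_congr_ae (Eventually.of_forall fun x => ?_)
          dsimp only
          rw [hpde' x, mul_neg, Finset.mul_sum, ← Finset.sum_neg_distrib]
      _ = ∑ k, ∫ x, -(g x *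
            fderiv ℝ (fun y => (b t k - μ * y k) * f y t) x (Pi.single k 1)) :=
          integral_finset_sum _ (fun k _ => (h2int k).neg)
      _ = ∑ k, ∫ x, fderiv ℝ g x (Pi.single k 1) * ((b t k - μ * x k) * f x t) := by
          refine Finset.sum_congr rfl fun k _ => ?_
          rw [integral_neg, ibp k, neg_neg]
      _ = ∫ x, ∑ k, fderiv ℝ g x (Pi.single k 1) * ((b t k - μ * x k) * f x t) :=
          (integral_finset_sum _ (fun k _ => h1int k)).symm
      _ = ∫ x, (1 / S x) * (b t i - x i / S x) * f x t :=
          integral_congr_ae (Eventually.of_forall fun x => halg x)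
  -- final assembly
  have heq : ∀ s ∈ Set.Icc (0:ℝ) (t+1),
      (∫ x, (x i / ∑ j, x j) * f x s) = ∫ x, g x * f x s := by
    intro s hs
    refine integral_congr_ae (Eventually.of_forall fun x => ?_)
    dsimp only
    by_cases hxK : x ∈ K
    · have hεx : ε ≤ S x := by have := hεK x hxK; linarith
      rw [hagree x hεx]
    · rw [hK0 x hxK s hs, mul_zero, mul_zero]
  have hfinal : HasDerivWithinAt (fun s => ∫ x, g x * f x s)
      (∫ x : Fin n → ℝ, (1 / ∑ j, x j) * (b t i - x i / ∑ j, x j) * f x t)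
      (Set.Ici 0) t := by
    convert stepA using 1
    simp only [hval, hSdef]
  refine hfinal.congr_of_eventuallyEq ?_ (heq t htV)
  filter_upwards [self_mem_nhdsWithin,
    mem_nhdsWithin_of_mem_nhds (Iio_mem_nhds (show t < t+1 by linarith))] with s h1 h2
  exact heq s ⟨h1, le_of_lt h2⟩
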